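/- The group presented by ⟨x1, x2 | x2^{-1} x1^{-1} x2^2 x1^{-1} x2^{-1} x1 x2 x1 x2 x1⟩ is isomorphic to the group presented by ⟨x, y | x^3 y^{-1} x^{-1} y^3 x^{-1} y^{-1}⟩. -/

import Mathlib

open FreeGroup

/-- Relator of the first presentation: x2⁻¹ x1⁻¹ x2² x1⁻¹ x2⁻¹ x1 x2 x1 x2 x1. -/
noncomputable def rel1 : FreeGroup (Fin 2) :=
  (of 1)⁻¹ * (of 0)⁻¹ * (of 1) ^ 2 * (of 0)⁻¹ * (of 1)⁻¹ *
    (of 0) * (of 1) * (of 0) * (of 1) * (of 0)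

/-- Relator of the second presentation: x³ y⁻¹ x⁻¹ y³ x⁻¹ y⁻¹. -/
noncomputable def rel2 : FreeGroup (Fin 2) :=
  (of 0) ^ 3 * (of 1)⁻¹ * (of 0)⁻¹ * (of 1) ^ 3 * (of 0)⁻¹ * (of 1)⁻¹

namespace Stmt16Aux

abbrev G1 := PresentedGroup ({rel1} : Set (FreeGroup (Fin 2)))
abbrev G2 := PresentedGroup ({rel2} : Set (FreeGroup (Fin 2)))

lemma hrel1 : PresentedGroup.mk {rel1} rel1 = (1 : G1) :=
  (QuotientGroup.eq_one_iff _).mpr (Subgroup.subset_normalClosure rfl)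

lemma hrel2 : PresentedGroup.mk {rel2} rel2 = (1 : G2) :=
  (QuotientGroup.eq_one_iff _).mpr (Subgroup.subset_normalClosure rfl)

/-- images of generators of G1 in G2 : a ↦ x y⁻¹, b ↦ y -/
noncomputable def fgen : Fin 2 → G2 := ![PresentedGroup.of 0 * (PresentedGroup.of 1)⁻¹,
  PresentedGroup.of 1]

/-- images of generators of G2 in G1 : x ↦ a b, y ↦ b -/
noncomputable def ggen : Fin 2 → G1 := ![PresentedGroup.of 0 * PresentedGroup.of 1,
  PresentedGroup.of 1]

lemma fcond : ∀ r ∈ ({rel1} : Set (FreeGroup (Fin 2))), FreeGroup.lift fgen r = 1 := by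
  intro r hr
  rw [Set.mem_singleton_iff] at hr
  subst hr
  have h2 : ((PresentedGroup.of 0 : G2) ^ 3 * (PresentedGroup.of 1)⁻¹ *
      (PresentedGroup.of 0)⁻¹ * (PresentedGroup.of 1) ^ 3 * (PresentedGroup.of 0)⁻¹ *
      (PresentedGroup.of 1)⁻¹) = 1 := by
    rw [← hrel2]
    rfl
  have key : FreeGroup.lift fgen rel1 =
      ((PresentedGroup.of 1 : G2) * (PresentedGroup.of 0)⁻¹ * (PresentedGroup.of 0)⁻¹ *
          (PresentedGroup.of 0)⁻¹) *
        ((PresentedGroup.of 0 : G2) ^ 3 * (PresentedGroup.of 1)⁻¹ * (PresentedGroup.of 0)⁻¹ *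
          (PresentedGroup.of 1) ^ 3 * (PresentedGroup.of 0)⁻¹ * (PresentedGroup.of 1)⁻¹) *
        ((PresentedGroup.of 1 : G2) * (PresentedGroup.of 0)⁻¹ * (PresentedGroup.of 0)⁻¹ *
          (PresentedGroup.of 0)⁻¹)⁻¹ := by
    simp only [rel1, MonoidHom.map_mul, MonoidHom.map_inv, MonoidHom.map_pow, FreeGroup.lift_apply_of, fgen,
      Matrix.cons_val_zero, Matrix.cons_val_one, Matrix.head_cons]
    simp [mul_assoc, pow_succ, pow_two]
  rw [key, h2]
  group

lemma gcond : ∀ r ∈ ({rel2} : Set (FreeGroup (Fin 2))), FreeGroup.lift ggen r = 1 := by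
  intro r hr
  rw [Set.mem_singleton_iff] at hr
  subst hr
  have h1 : ((PresentedGroup.of 1 : G1)⁻¹ * (PresentedGroup.of 0)⁻¹ *
      (PresentedGroup.of 1) ^ 2 * (PresentedGroup.of 0)⁻¹ * (PresentedGroup.of 1)⁻¹ *
      (PresentedGroup.of 0) * (PresentedGroup.of 1) * (PresentedGroup.of 0) *
      (PresentedGroup.of 1) * (PresentedGroup.of 0)) = 1 := by
    rw [← hrel1]
    rfl
  have key : FreeGroup.lift ggen rel2 =
      ((PresentedGroup.of 0 : G1) * PresentedGroup.of 1 * PresentedGroup.of 0 *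
          PresentedGroup.of 1 * PresentedGroup.of 0) *
        ((PresentedGroup.of 1 : G1)⁻¹ * (PresentedGroup.of 0)⁻¹ * (PresentedGroup.of 1) ^ 2 *
          (PresentedGroup.of 0)⁻¹ * (PresentedGroup.of 1)⁻¹ * PresentedGroup.of 0 *
          PresentedGroup.of 1 * PresentedGroup.of 0 * PresentedGroup.of 1 * PresentedGroup.of 0) *
        ((PresentedGroup.of 0 : G1) * PresentedGroup.of 1 * PresentedGroup.of 0 *
          PresentedGroup.of 1 * PresentedGroup.of 0)⁻¹ := by
    simp only [rel2, MonoidHom.map_mul, MonoidHom.map_inv, MonoidHom.map_pow, FreeGroup.lift_apply_of, ggen,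
      Matrix.cons_val_zero, Matrix.cons_val_one, Matrix.head_cons]
    simp [mul_assoc, pow_succ, pow_two]
  rw [key, h1]
  group

noncomputable def f : G1 →* G2 := PresentedGroup.toGroup fcond
noncomputable def g : G2 →* G1 := PresentedGroup.toGroup gcond

lemma gf : g.comp f = MonoidHom.id G1 := by
  ext i
  fin_cases i <;>
    simp [f, g, fgen, ggen, PresentedGroup.toGroup.of]

lemma fg : f.comp g = MonoidHom.id G2 := by
  ext i
  fin_cases i <;>
    simp [f, g, fgen, ggen, PresentedGroup.toGroup.of]

end Stmt16Aux

theorem stmt16 :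
    Nonempty (PresentedGroup ({rel1} : Set (FreeGroup (Fin 2))) ≃*
              PresentedGroup ({rel2} : Set (FreeGroup (Fin 2)))) := by
  exact ⟨MulEquiv.ofBijective Stmt16Aux.f
    ⟨Function.LeftInverse.injective (g := Stmt16Aux.g)
      (fun x => congrFun (congrArg DFunLike.coe Stmt16Aux.gf) x),
     Function.RightInverse.surjective (g := Stmt16Aux.g)
      (fun x => congrFun (congrArg DFunLike.coe Stmt16Aux.fg) x)⟩⟩
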